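/- For fixed q ∈ (0,1/2) and integers R, L ≥ 1, let p₀ = p₀(q,R,L) be the unique point in (1/2,1) with α(p₀,q,R,L) = 1/2. Then q + p₀ < 1 if R < L, and q + p₀ > 1 if R > L. -/

import Mathlib

noncomputable def alpha (p q : ℝ) (R L : ℕ) : ℝ :=
  (p * ((1-q) * q^R * (1 - (1-p)^L)) + q * (p * (1-p)^L * (1 - q^R))) /
    ((1-q) * q^R * (1 - (1-p)^L) + p * (1-p)^L * (1 - q^R))

lemma aux_mono (q : ℝ) (R L : ℕ) (hq0 : 0 < q) (hq2 : q < 1/2) (hR : 1 ≤ R) (hL : 1 ≤ L) :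
    StrictMonoOn (fun p : ℝ => (p-1/2)*((1-q)*q^R)*(1-(1-p)^L)
      - ((1/2-q)*(1-q^R))*(p*(1-p)^L)) (Set.Ioo (1/2:ℝ) 1) := by
  intro a ha b hb hab
  obtain ⟨ha1, ha2⟩ := ha
  obtain ⟨hb1, hb2⟩ := hb
  obtain ⟨M, rfl⟩ : ∃ M, L = M + 1 := ⟨L - 1, by omega⟩
  have hq1 : q < 1 := by linarith
  have hqR : q^R < 1 := pow_lt_one₀ hq0.le hq1 (by omega)
  have hqRpos : 0 < q^R := pow_pos hq0 R
  have hBpos : (0:ℝ) < (1-b)^M := pow_pos (by linarith) M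
  have hAB : (1-b)^M ≤ (1-a)^M := pow_le_pow_left₀ (by linarith) (by linarith) M
  have hA1 : (1-a)^M ≤ 1 := pow_le_one₀ (by linarith) (by linarith)
  have hΔg : (a-1/2)*(1-(1-a)^(M+1)) < (b-1/2)*(1-(1-b)^(M+1)) := by
    rw [pow_succ, pow_succ]
    nlinarith [mul_pos hBpos (sub_pos.mpr hab), mul_nonneg (sub_nonneg.mpr hAB) (by linarith : (0:ℝ) ≤ 1 - a)]
  have hΔh : b*(1-b)^(M+1) < a*(1-a)^(M+1) := by
    rw [pow_succ, pow_succ]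
    have h1 : b*(1-b) < a*(1-a) := by nlinarith
    have h2 : 0 < b*(1-b) := by nlinarith
    calc b*((1-b)^M*(1-b)) = (b*(1-b))*(1-b)^M := by ring
    _ < (a*(1-a))*(1-b)^M := by nlinarith
    _ ≤ (a*(1-a))*(1-a)^M := by nlinarith
    _ = a*((1-a)^M*(1-a)) := by ring
  have hK : 0 < (1-q)*q^R := mul_pos (by linarith) hqRpos
  have hc : 0 < (1/2-q)*(1-q^R) := by nlinarith
  simp only
  nlinarith [mul_pos hK (sub_pos.mpr hΔg), mul_pos hc (sub_pos.mpr hΔh)]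

theorem stmt2 (q p₀ : ℝ) (R L : ℕ) (hq : q ∈ Set.Ioo (0:ℝ) (1/2))
    (hR : 1 ≤ R) (hL : 1 ≤ L)
    (hp₀ : p₀ ∈ Set.Ioo (1/2 : ℝ) 1) (hcrit : alpha p₀ q R L = 1/2) :
    (R < L → q + p₀ < 1) ∧ (L < R → 1 < q + p₀) := by
  obtain ⟨hq0, hq2⟩ := hq
  obtain ⟨hp1, hp2⟩ := hp₀
  have hq1 : q < 1 := by linarith
  have hqR : q^R < 1 := pow_lt_one₀ hq0.le hq1 (by omega)
  have hqRpos : 0 < q^R := pow_pos hq0 R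
  have hpL : (1-p₀)^L < 1 := pow_lt_one₀ (by linarith) (by linarith) (by omega)
  have hpLpos : (0:ℝ) ≤ (1-p₀)^L := pow_nonneg (by linarith) L
  set f : ℝ → ℝ := fun p => (p-1/2)*((1-q)*q^R)*(1-(1-p)^L)
      - ((1/2-q)*(1-q^R))*(p*(1-p)^L) with hf
  have hmono := aux_mono q R L hq0 hq2 hR hL
  have hD : 0 < (1-q) * q^R * (1 - (1-p₀)^L) + p₀ * (1-p₀)^L * (1 - q^R) := by
    have h1 : 0 < (1-q) * q^R * (1 - (1-p₀)^L) :=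
      mul_pos (mul_pos (by linarith) hqRpos) (by linarith)
    have h2 : 0 ≤ p₀ * (1-p₀)^L * (1 - q^R) := by
      apply mul_nonneg (mul_nonneg (by linarith) hpLpos) (by linarith)
    linarith
  have hcrit' : p₀ * ((1-q) * q^R * (1 - (1-p₀)^L)) + q * (p₀ * (1-p₀)^L * (1 - q^R))
      = 1/2 * ((1-q) * q^R * (1 - (1-p₀)^L) + p₀ * (1-p₀)^L * (1 - q^R)) := by
    rw [alpha, div_eq_iff hD.ne'] at hcrit
    linarith [hcrit]
  have hfp₀ : f p₀ = 0 := by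
    simp only [hf]
    linear_combination hcrit'
  have hval : f (1-q) = (1/2-q)*(1-q)*(q^R - q^L) := by
    simp only [hf]
    ring
  have h1qmem : (1-q) ∈ Set.Ioo (1/2:ℝ) 1 := ⟨by linarith, by linarith⟩
  have hp₀mem : p₀ ∈ Set.Ioo (1/2:ℝ) 1 := ⟨hp1, hp2⟩
  constructor
  · intro hRL
    have hqLR : q^L < q^R := pow_lt_pow_right_of_lt_one₀ hq0 hq1 hRL
    have hfq : 0 < f (1-q) := by
      rw [hval]
      exact mul_pos (mul_pos (by linarith) (by linarith)) (by linarith)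
    have : p₀ < 1 - q := by
      by_contra h
      push_neg at h
      rcases eq_or_lt_of_le h with h' | h'
      · rw [h'] at hfq; linarith
      · have h2 := hmono h1qmem hp₀mem h'
        rw [← hf] at h2
        linarith
    linarith
  · intro hLR
    have hqLR : q^R < q^L := pow_lt_pow_right_of_lt_one₀ hq0 hq1 hLR
    have hfq : f (1-q) < 0 := by
      rw [hval]
      have : 0 < (1/2-q)*(1-q)*(q^L-q^R) :=
        mul_pos (mul_pos (by linarith) (by linarith)) (by linarith)
      nlinarith
    have : 1 - q < p₀ := by
      by_contra h
      push_neg at h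
      rcases eq_or_lt_of_le h with h' | h'
      · rw [h'] at hfp₀; linarith
      · have h2 := hmono hp₀mem h1qmem h'
        rw [← hf] at h2
        linarith
    linarith
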